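/- If ℱ ⊆ 2^[t] is a family of odd-sized sets such that every pairwise intersection of two distinct members also has odd size, then |ℱ| ≤ 2^{(t-1)/2}. -/

import Mathlib

open Module

/-- The dot-product bilinear form on `Fin t → ZMod 2`. -/
noncomputable def dotB (t : ℕ) : LinearMap.BilinForm (ZMod 2) (Fin t → ZMod 2) :=
  LinearMap.mk₂ (ZMod 2) (fun v w => ∑ i, v i * w i)
    (fun v v' w => by simp [add_mul, Finset.sum_add_distrib])
    (fun a v w => by simp [Finset.mul_sum, mul_assoc])
    (fun v w w' => by simp [mul_add, Finset.sum_add_distrib])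
    (fun a v w => by simp [Finset.mul_sum, mul_assoc, mul_left_comm])

lemma dotB_apply {t : ℕ} (v w : Fin t → ZMod 2) : dotB t v w = ∑ i, v i * w i := rfl

lemma dotB_comm {t : ℕ} (v w : Fin t → ZMod 2) : dotB t v w = dotB t w v := by
  simp [dotB_apply, mul_comm]

lemma dotB_refl (t : ℕ) : (dotB t).IsRefl := by
  intro v w h
  rwa [dotB_comm]

lemma dotB_nondegenerate (t : ℕ) : (dotB t).Nondegenerate := by
  refine (LinearMap.IsRefl.nondegenerate_iff_separatingLeft (dotB_refl t)).mpr ?_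
  intro v hv
  funext i
  have := hv (Pi.single i 1)
  simpa [dotB_apply, Pi.single_apply, mul_ite, Finset.sum_ite_eq] using this

/-- Characteristic vector of a finite set. -/
def charVec {t : ℕ} (A : Finset (Fin t)) : Fin t → ZMod 2 := fun i => if i ∈ A then 1 else 0

lemma charVec_injective {t : ℕ} : Function.Injective (charVec (t := t)) := by
  intro A C h
  ext i
  have hi := congrFun h i
  by_cases hA : i ∈ A <;> by_cases hC : i ∈ C <;> simp_all [charVec]

lemma dotB_charVec {t : ℕ} (A C : Finset (Fin t)) :
    dotB t (charVec A) (charVec C) = ((A ∩ C).card : ZMod 2) := by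
  rw [dotB_apply]
  have h : ∀ i, charVec A i * charVec C i = if i ∈ A ∩ C then (1 : ZMod 2) else 0 := by
    intro i
    by_cases hA : i ∈ A <;> by_cases hC : i ∈ C <;> simp [charVec, hA, hC]
  simp only [h]
  rw [Finset.sum_ite_mem, Finset.univ_inter, Finset.sum_const, nsmul_eq_mul, mul_one]

/-- Reverse Oddtown bound: if every member of `ℱ ⊆ 2^[t]` has odd size and every pairwise
intersection of distinct members also has odd size, then `|ℱ| ≤ 2^((t-1)/2)`. -/
theorem reverse_oddtown {t : ℕ} (ℱ : Finset (Finset (Fin t)))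
    (hodd : ∀ A ∈ ℱ, Odd A.card)
    (hint : ∀ A ∈ ℱ, ∀ B ∈ ℱ, A ≠ B → Odd ((A ∩ B).card)) :
    (ℱ.card : ℝ) ≤ (2 : ℝ) ^ (((t : ℝ) - 1) / 2) := by
  classical
  rcases ℱ.eq_empty_or_nonempty with rfl | ⟨A₀, hA₀⟩
  · simp only [Finset.card_empty, Nat.cast_zero]
    positivity
  set F := ZMod 2
  set B := dotB t with hB
  -- all pairwise dot products (including self) are 1
  have hone : ∀ A ∈ ℱ, ∀ C ∈ ℱ, B (charVec A) (charVec C) = 1 := by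
    intro A hA C hC
    rw [dotB_charVec]
    rcases eq_or_ne A C with rfl | hne
    · obtain ⟨k, hk⟩ := hodd A hA
      rw [Finset.inter_self, hk]
      push_cast
      simp [show (2 : ZMod 2) = 0 from rfl]
    · obtain ⟨k, hk⟩ := hint A hA C hC hne
      rw [hk]
      push_cast
      simp [show (2 : ZMod 2) = 0 from rfl]
  set v₀ : Fin t → F := charVec A₀ with hv₀def
  set G : Set (Fin t → F) := (fun A => charVec A + v₀) '' ℱ with hG
  set U : Submodule F (Fin t → F) := Submodule.span F G with hU
  -- generators are pairwise orthogonal and orthogonal to v₀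
  have hgen : ∀ x ∈ G, ∀ y ∈ G, B x y = 0 := by
    rintro x ⟨A, hA, rfl⟩ y ⟨C, hC, rfl⟩
    simp only [map_add, LinearMap.add_apply]
    rw [hone A hA C hC, hone A hA A₀ hA₀, hone A₀ hA₀ C hC, hone A₀ hA₀ A₀ hA₀]
    decide
  have hgenv₀ : ∀ x ∈ G, B x v₀ = 0 := by
    rintro x ⟨A, hA, rfl⟩
    simp only [map_add, LinearMap.add_apply]
    rw [hone A hA A₀ hA₀, hone A₀ hA₀ A₀ hA₀]
    decide
  -- any element of U is orthogonal to all generators and to v₀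
  have hUy : ∀ y : Fin t → F, (∀ x ∈ G, B x y = 0) → ∀ n ∈ U, B n y = 0 := by
    intro y hy n hn
    have : U ≤ LinearMap.ker (B.flip y) := by
      rw [hU, Submodule.span_le]
      intro x hx
      simpa [LinearMap.mem_ker] using hy x hx
    simpa using this hn
  have hUU : ∀ n ∈ U, ∀ y ∈ U, B n y = 0 := by
    intro n hn y hy
    refine hUy y ?_ n hn
    intro x hx
    exact dotB_refl t y x (hUy x (fun z hz => hgen z hz x hx) y hy)
  have hUv₀ : ∀ n ∈ U, B n v₀ = 0 := hUy v₀ hgenv₀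
  -- v₀ ∉ U since B v₀ v₀ = 1
  have hv₀v₀ : B v₀ v₀ = 1 := hone A₀ hA₀ A₀ hA₀
  have hv₀U : v₀ ∉ U := by
    intro h
    have := hUv₀ v₀ h
    rw [hv₀v₀] at this
    exact one_ne_zero this
  -- dimension bound: 2 * finrank U + 1 ≤ t
  have hUorth : U ⊔ Submodule.span F {v₀} ≤ B.orthogonal U := by
    rw [sup_le_iff]
    constructor
    · intro y hy
      rw [LinearMap.BilinForm.mem_orthogonal_iff]
      intro n hn
      exact hUU n hn y hy
    · rw [Submodule.span_le]
      rintro x rfl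
      rw [SetLike.mem_coe, LinearMap.BilinForm.mem_orthogonal_iff]
      intro n hn
      exact hUv₀ n hn
  have hlt : U < U ⊔ Submodule.span F {v₀} :=
    lt_of_le_not_ge le_sup_left
      (fun h => hv₀U (h (Submodule.mem_sup_right (Submodule.mem_span_singleton_self v₀))))
  have hrank : finrank F ↥U < finrank F ↥(B.orthogonal U) :=
    Submodule.finrank_lt_finrank_of_lt (lt_of_lt_of_le hlt hUorth)
  have horth : finrank F ↥(B.orthogonal U) = finrank F (Fin t → F) - finrank F ↥U :=
    LinearMap.BilinForm.finrank_orthogonal (dotB_nondegenerate t) U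
  have hfr : finrank F (Fin t → F) = t := by
    simp [Module.finrank_pi]
  have hle : finrank F ↥U ≤ finrank F (Fin t → F) := Submodule.finrank_le U
  set d := finrank F ↥U with hd
  have hdim : 2 * d + 1 ≤ t := by omega
  -- counting: ℱ injects into U
  haveI : Fintype ↥U := Fintype.ofFinite ↥U
  have hcard : ℱ.card ≤ Fintype.card ↥U := by
    rw [← Finset.card_univ]
    apply Finset.card_le_card_of_injOn
      (fun A => if h : A ∈ ℱ then
        (⟨charVec A + v₀, Submodule.subset_span ⟨A, h, rfl⟩⟩ : ↥U) else 0)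
    · intro A hA; exact Finset.mem_univ _
    · intro A hA C hC h
      simp only [Finset.mem_coe] at hA hC
      simp only [dif_pos hA, dif_pos hC, Subtype.mk_eq_mk] at h
      exact charVec_injective (add_right_cancel h)
  have hcardU : Fintype.card ↥U = 2 ^ d := by
    rw [card_eq_pow_finrank (K := F) (V := ↥U), ZMod.card]
  -- put it together over ℝ
  have h1 : (ℱ.card : ℝ) ≤ (2 : ℝ) ^ (d : ℕ) := by
    rw [hcardU] at hcard
    exact_mod_cast hcard
  refine h1.trans ?_
  rw [← Real.rpow_natCast 2 d]
  apply Real.rpow_le_rpow_of_exponent_le (by norm_num)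
  have : (2 * d + 1 : ℝ) ≤ t := by exact_mod_cast hdim
  linarith
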